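/- Let p be a prime and let ℰ_p = ⋃_{n=0}^∞ (a_n + p^n ℤ_p) be the p-adic Euler string, with a_0 = 0 and a_n = a_{n−1} + p^{n−2}; let β = ⋃_{n=0}^∞ S(a_n, p^{−n}) be its metric boundary, N_ε = {x ∈ ℰ_p : dist(x, β) < ε}, and V(ε) = μ_H(N_ε \ β). Then for every real ε with 0 < ε ≤ 1, V(ε) = p^{−⌊log_p(1/ε)⌋} / (p(p−1)), where ⌊·⌋ is the floor function and log_p denotes the logarithm to base p. -/

import Mathlib

open MeasureTheory

noncomputable instance padicMeasurableSpace (p : ℕ) [Fact p.Prime] : MeasurableSpace ℚ_[p] :=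
  borel _

instance padicBorelSpace (p : ℕ) [Fact p.Prime] : BorelSpace ℚ_[p] := ⟨rfl⟩

/-- The closed unit ball `ℤ_p = {x : ℚ_p | |x|_p ≤ 1}` of `ℚ_p`, as a positive compact set. -/
noncomputable def padicUnitBall (p : ℕ) [Fact p.Prime] :
    TopologicalSpace.PositiveCompacts ℚ_[p] where
  carrier := Metric.closedBall 0 1
  isCompact' := isCompact_closedBall 0 1
  interior_nonempty' :=
    ⟨0, mem_interior_iff_mem_nhds.mpr (Metric.closedBall_mem_nhds 0 one_pos)⟩

/-- The Haar measure `μ_H` on the additive group `ℚ_p`, normalized so that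
`μ_H(ℤ_p) = 1`. -/
noncomputable def padicHaar (p : ℕ) [Fact p.Prime] : Measure ℚ_[p] :=
  Measure.addHaarMeasure (padicUnitBall p)

section aux
variable (p : ℕ) [Fact p.Prime]

instance : (padicHaar p).IsAddHaarMeasure := by
  unfold padicHaar; infer_instance

lemma padicHaar_closedBall_center (c : ℚ_[p]) (r : ℝ) :
    padicHaar p (Metric.closedBall c r) = padicHaar p (Metric.closedBall 0 r) := by
  have h : Metric.closedBall c r = (fun x => -c + x) ⁻¹' (Metric.closedBall 0 r) := by
    ext x
    simp [Metric.mem_closedBall, dist_eq_norm, neg_add_eq_sub]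
  rw [h, measure_preimage_add]

lemma padic_ball_decomp (n : ℕ) :
    Metric.closedBall (0:ℚ_[p]) ((p:ℝ)^(-(n:ℤ))) =
    ⋃ j ∈ Finset.range p,
      Metric.closedBall ((j:ℚ_[p]) * (p:ℚ_[p])^n) ((p:ℝ)^(-((n:ℤ)+1))) := by
  have hp1 : (1:ℝ) < p := Nat.one_lt_cast.mpr (Fact.out (p := p.Prime)).one_lt
  ext x
  simp only [Set.mem_iUnion, Metric.mem_closedBall, dist_eq_norm, sub_zero, exists_prop,
    Finset.mem_range]
  constructor
  · intro hx
    set y : ℚ_[p] := x * (p:ℚ_[p])^(-(n:ℤ)) with hy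
    have hyn : ‖y‖ ≤ 1 := by
      rw [hy, norm_mul, Padic.norm_p_zpow, neg_neg]
      calc ‖x‖ * (p:ℝ)^(n:ℤ) ≤ (p:ℝ)^(-(n:ℤ)) * (p:ℝ)^(n:ℤ) := by
            apply mul_le_mul_of_nonneg_right hx (zpow_nonneg (by positivity) _)
        _ = 1 := by rw [← zpow_add₀ (by positivity), neg_add_cancel, zpow_zero]
    set z : ℤ_[p] := ⟨y, hyn⟩ with hz
    refine ⟨z.appr 1, by simpa using z.appr_lt 1, ?_⟩
    have hspec : ‖z - (z.appr 1 : ℤ_[p])‖ ≤ (p:ℝ)^(-(1:ℕ):ℤ) := by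
      rw [PadicInt.norm_le_pow_iff_mem_span_pow]
      simpa using z.appr_spec 1
    have hcoe : ‖y - (z.appr 1 : ℚ_[p])‖ ≤ (p:ℝ)⁻¹ := by
      have : ((z - (z.appr 1 : ℤ_[p]) : ℤ_[p]) : ℚ_[p]) = y - (z.appr 1 : ℚ_[p]) := by
        push_cast [hz]; rfl
      rw [← this, ← PadicInt.norm_def]
      simpa using hspec
    have hxe : x - (z.appr 1 : ℚ_[p]) * (p:ℚ_[p])^n = (y - (z.appr 1 : ℚ_[p])) * (p:ℚ_[p])^n := by
      rw [hy, sub_mul, mul_assoc, ← zpow_natCast (p:ℚ_[p]) n, ← zpow_add₀, neg_add_cancel,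
        zpow_zero, mul_one]
      exact_mod_cast (Fact.out (p := p.Prime)).ne_zero
    rw [hxe, norm_mul, Padic.norm_p_pow]
    calc ‖y - (z.appr 1 : ℚ_[p])‖ * (p:ℝ)^(-(n:ℤ))
        ≤ (p:ℝ)⁻¹ * (p:ℝ)^(-(n:ℤ)) :=
          mul_le_mul_of_nonneg_right hcoe (zpow_nonneg (by positivity) _)
      _ = (p:ℝ)^(-((n:ℤ)+1)) := by
          rw [← zpow_neg_one, ← zpow_add₀ (by positivity)]; ring_nf
  · rintro ⟨j, hj, hx⟩
    have h2 : ‖(j:ℚ_[p]) * (p:ℚ_[p])^n‖ ≤ (p:ℝ)^(-(n:ℤ)) := by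
      rw [norm_mul, Padic.norm_p_pow]
      calc ‖(j:ℚ_[p])‖ * (p:ℝ)^(-(n:ℤ)) ≤ 1 * (p:ℝ)^(-(n:ℤ)) := by
            apply mul_le_mul_of_nonneg_right _ (zpow_nonneg (by positivity) _)
            exact_mod_cast Padic.norm_int_le_one (j : ℤ)
        _ = _ := one_mul _
    calc ‖x‖ = ‖(x - (j:ℚ_[p]) * (p:ℚ_[p])^n) + (j:ℚ_[p]) * (p:ℚ_[p])^n‖ := by ring_nf
      _ ≤ max ‖x - (j:ℚ_[p]) * (p:ℚ_[p])^n‖ ‖(j:ℚ_[p]) * (p:ℚ_[p])^n‖ := Padic.nonarchimedean _ _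
      _ ≤ (p:ℝ)^(-(n:ℤ)) := by
          apply max_le _ h2
          exact hx.trans (zpow_le_zpow_right₀ hp1.le (by omega))

end aux
section aux2
variable (p : ℕ) [Fact p.Prime]

lemma padic_norm_sub_nat_eq_one {j j' : ℕ} (hj : j < p) (hj' : j' < p) (hne : j ≠ j') :
    ‖((j:ℚ_[p]) - j')‖ = 1 := by
  have hcast : ((j:ℚ_[p]) - j') = (((j:ℤ) - j' : ℤ) : ℚ_[p]) := by push_cast; ring
  rw [hcast]
  rcases lt_or_eq_of_le (Padic.norm_int_le_one (p := p) ((j:ℤ) - j')) with h | h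
  · exfalso
    have hdvd : (p:ℤ) ∣ ((j:ℤ) - j') := Padic.norm_intCast_lt_one_iff.mp h
    have h1 : ((j:ℤ) - j').natAbs < p := by omega
    have h2 : p ∣ ((j:ℤ) - j').natAbs := Int.natCast_dvd.mp hdvd
    have h3 : ((j:ℤ) - j').natAbs ≠ 0 := by omega
    exact absurd (Nat.le_of_dvd (Nat.pos_of_ne_zero h3) h2) (by omega)
  · exact h

lemma padicHaar_closedBall_zero (n : ℕ) :
    padicHaar p (Metric.closedBall (0:ℚ_[p]) ((p:ℝ)^(-(n:ℤ))))
      = ENNReal.ofReal ((p:ℝ)^(-(n:ℤ))) := by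
  have hp0 : (0:ℝ) < p := by exact_mod_cast (Fact.out (p := p.Prime)).pos
  induction n with
  | zero =>
    simp only [Nat.cast_zero, neg_zero, zpow_zero, ENNReal.ofReal_one]
    exact Measure.addHaarMeasure_self (K₀ := padicUnitBall p)
  | succ n ih =>
    have hdis : Set.PairwiseDisjoint (↑(Finset.range p))
        (fun j : ℕ => Metric.closedBall ((j:ℚ_[p]) * (p:ℚ_[p])^n) ((p:ℝ)^(-((n:ℤ)+1)))) := by
      intro i hi j hj hij
      simp only [Finset.coe_range, Set.mem_Iio] at hi hj
      rw [Function.onFun, Set.disjoint_left]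
      intro x hx hx'
      simp only [Metric.mem_closedBall, dist_eq_norm] at hx hx'
      have hd : ‖(i:ℚ_[p]) * (p:ℚ_[p])^n - (j:ℚ_[p]) * (p:ℚ_[p])^n‖ = (p:ℝ)^(-(n:ℤ)) := by
        have he : (i:ℚ_[p]) * (p:ℚ_[p])^n - (j:ℚ_[p]) * (p:ℚ_[p])^n
            = ((i:ℚ_[p]) - j) * (p:ℚ_[p])^n := by ring
        rw [he, norm_mul, Padic.norm_p_pow, padic_norm_sub_nat_eq_one p hi hj hij, one_mul]
      have hle : ‖(i:ℚ_[p]) * (p:ℚ_[p])^n - (j:ℚ_[p]) * (p:ℚ_[p])^n‖ ≤ (p:ℝ)^(-((n:ℤ)+1)) := by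
        have he : (i:ℚ_[p]) * (p:ℚ_[p])^n - (j:ℚ_[p]) * (p:ℚ_[p])^n
            = ((i:ℚ_[p]) * (p:ℚ_[p])^n - x) + (x - (j:ℚ_[p]) * (p:ℚ_[p])^n) := by ring
        rw [he]
        refine (Padic.nonarchimedean _ _).trans (max_le ?_ hx')
        rwa [norm_sub_rev]
      rw [hd] at hle
      have hcon : (p:ℝ)^(-((n:ℤ)+1)) < (p:ℝ)^(-(n:ℤ)) := by
        apply zpow_lt_zpow_right₀ (by exact_mod_cast (Fact.out (p := p.Prime)).one_lt)
        omega
      linarith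
    have hmeas : ∀ j ∈ Finset.range p, MeasurableSet
        (Metric.closedBall ((j:ℚ_[p]) * (p:ℚ_[p])^n) ((p:ℝ)^(-((n:ℤ)+1)))) :=
      fun j _ => Metric.isClosed_closedBall.measurableSet
    have key : padicHaar p (Metric.closedBall (0:ℚ_[p]) ((p:ℝ)^(-(n:ℤ))))
        = (p : ENNReal) * padicHaar p (Metric.closedBall (0:ℚ_[p]) ((p:ℝ)^(-((n:ℤ)+1)))) := by
      rw [padic_ball_decomp, measure_biUnion_finset hdis hmeas]
      have hc : ∀ j ∈ Finset.range p,
          padicHaar p (Metric.closedBall ((j:ℚ_[p]) * (p:ℚ_[p])^n) ((p:ℝ)^(-((n:ℤ)+1))))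
          = padicHaar p (Metric.closedBall (0:ℚ_[p]) ((p:ℝ)^(-((n:ℤ)+1)))) :=
        fun j _ => padicHaar_closedBall_center p _ _
      rw [Finset.sum_congr rfl hc, Finset.sum_const, Finset.card_range, nsmul_eq_mul]
    rw [ih] at key
    have hcast : ((n+1 : ℕ) : ℤ) = (n:ℤ) + 1 := by push_cast; ring
    rw [hcast]
    refine (ENNReal.mul_right_inj (a := (p:ENNReal))
      (by exact_mod_cast (Fact.out (p := p.Prime)).ne_zero) (ENNReal.natCast_ne_top p)).mp ?_
    rw [← key, ← ENNReal.ofReal_natCast p, ← ENNReal.ofReal_mul hp0.le]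
    congr 1
    rw [show -(n:ℤ) = 1 + (-((n:ℤ)+1)) by ring, zpow_add₀ (ne_of_gt hp0), zpow_one]

lemma padicHaar_closedBall (c : ℚ_[p]) (n : ℕ) :
    padicHaar p (Metric.closedBall c ((p:ℝ)^(-(n:ℤ))))
      = ENNReal.ofReal ((p:ℝ)^(-(n:ℤ))) := by
  rw [padicHaar_closedBall_center, padicHaar_closedBall_zero]

end aux2

section aux3
variable {p : ℕ} [Fact p.Prime]

lemma padic_norm_add_of_lt {u v : ℚ_[p]} (h : ‖u‖ < ‖v‖) : ‖u + v‖ = ‖v‖ := by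
  rw [Padic.add_eq_max_of_ne (ne_of_lt h), max_eq_right h.le]

lemma padic_norm_sub_le_max (u w : ℚ_[p]) : ‖u - w‖ ≤ max ‖u‖ ‖w‖ := by
  rw [sub_eq_add_neg]
  simpa [norm_neg] using Padic.nonarchimedean u (-w)

variable {a : ℕ → ℚ_[p]}

lemma a_diff_norm (hrec : ∀ n : ℕ, 1 ≤ n → a n = a (n - 1) + (p : ℚ_[p]) ^ ((n : ℤ) - 2))
    (m : ℕ) : ∀ n : ℕ, m + 1 ≤ n → ‖a n - a m‖ = (p:ℝ)^(1 - (m:ℤ)) := by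
  have hp1 : (1:ℝ) < p := by exact_mod_cast (Fact.out (p := p.Prime)).one_lt
  intro n hn
  induction n, hn using Nat.le_induction with
  | base =>
    have h := hrec (m+1) (by omega)
    rw [Nat.add_sub_cancel] at h
    rw [h]
    have : a m + (p:ℚ_[p]) ^ (((m+1:ℕ):ℤ) - 2) - a m = (p:ℚ_[p]) ^ (((m+1:ℕ):ℤ) - 2) := by ring
    rw [this, Padic.norm_p_zpow]
    congr 1
    push_cast
    ring
  | succ n hn ih =>
    have h := hrec (n+1) (by omega)
    rw [Nat.add_sub_cancel] at h
    rw [h]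
    have he : a n + (p:ℚ_[p]) ^ (((n+1:ℕ):ℤ) - 2) - a m
        = (p:ℚ_[p]) ^ (((n+1:ℕ):ℤ) - 2) + (a n - a m) := by ring
    rw [he, padic_norm_add_of_lt, ih]
    rw [Padic.norm_p_zpow, ih]
    apply zpow_lt_zpow_right₀ hp1
    push_cast
    omega

lemma a_diff_norm' (hrec : ∀ n : ℕ, 1 ≤ n → a n = a (n - 1) + (p : ℚ_[p]) ^ ((n : ℤ) - 2))
    {m n : ℕ} (h : n ≠ m) : ‖a m - a n‖ = (p:ℝ)^(1 - ((min m n : ℕ):ℤ)) := by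
  rcases lt_or_gt_of_ne h with h1 | h1
  · rw [min_eq_right h1.le]
    exact a_diff_norm hrec n m (by omega)
  · rw [min_eq_left h1.le, norm_sub_rev]
    exact a_diff_norm hrec m n (by omega)

end aux3

/-- Let `ℰ_p = ⋃_n (a_n + p^n ℤ_p)` be the p-adic Euler string
(`a_0 = 0`, `a_n = a_{n-1} + p^{n-2}`), with metric boundary `β = ⋃_n S(a_n, p^{-n})`,
thick inner ε-neighborhood `N_ε` and thin tube volume `V(ε) = μ_H(N_ε \ β)`. Then for
`0 < ε ≤ 1`, `V(ε) = p^{-⌊log_p(1/ε)⌋} / (p(p-1))`. -/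
theorem padic_euler_string_tube_volume (p : ℕ) [Fact p.Prime]
    (a : ℕ → ℚ_[p]) (h0 : a 0 = 0)
    (hrec : ∀ n : ℕ, 1 ≤ n → a n = a (n - 1) + (p : ℚ_[p]) ^ ((n : ℤ) - 2))
    (ε : ℝ) (hε : 0 < ε) (hε1 : ε ≤ 1) :
    padicHaar p
        ({x ∈ ⋃ m : ℕ, Metric.closedBall (a m) ((p : ℝ) ^ (-(m : ℤ))) |
            Metric.infDist x (⋃ m : ℕ, Metric.sphere (a m) ((p : ℝ) ^ (-(m : ℤ)))) < ε}
          \ ⋃ m : ℕ, Metric.sphere (a m) ((p : ℝ) ^ (-(m : ℤ))))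
      = ENNReal.ofReal
          ((p : ℝ) ^ (-⌊Real.logb p (1 / ε)⌋) / ((p : ℝ) * ((p : ℝ) - 1))) := by
  have hp1 : (1:ℝ) < p := by exact_mod_cast (Fact.out (p := p.Prime)).one_lt
  have hp0 : (0:ℝ) < p := zero_lt_one.trans hp1
  set β := ⋃ m : ℕ, Metric.sphere (a m) ((p : ℝ) ^ (-(m : ℤ))) with hβ
  set K := ⌊Real.logb p (1 / ε)⌋ with hK
  have hKnonneg : 0 ≤ K :=
    Int.floor_nonneg.mpr (Real.logb_nonneg hp1 (by rw [le_div_iff₀ hε]; linarith))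
  set k := K.toNat with hk
  have hKk : K = (k:ℤ) := (Int.toNat_of_nonneg hKnonneg).symm
  set f : ℕ → Set ℚ_[p] := fun m => Metric.closedBall (a m) ((p:ℝ)^(-(m:ℤ)-1)) with hf
  have hβne : β.Nonempty :=
    ⟨a 0 + 1, Set.mem_iUnion.mpr ⟨0, by simp [Metric.mem_sphere, dist_eq_norm]⟩⟩
  -- condition equivalence
  have hcond : ∀ m : ℕ, ((p:ℝ)^(-(m:ℤ)) < ε ↔ k + 1 ≤ m) := by
    intro m
    calc (p:ℝ)^(-(m:ℤ)) < ε ↔ 1/ε < (p:ℝ)^(m:ℕ) := by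
          rw [zpow_neg, zpow_natCast, inv_lt_comm₀ (pow_pos hp0 m) hε, one_div]
      _ ↔ Real.logb p (1/ε) < (m:ℝ) := by
          rw [Real.logb_lt_iff_lt_rpow hp1 (by positivity), Real.rpow_natCast]
      _ ↔ K < (m:ℤ) := by
          rw [hK, Int.floor_lt]
          push_cast
          rfl
      _ ↔ k + 1 ≤ m := by rw [hKk]; constructor <;> intro h <;> omega
  -- distance lower bound
  have hlow : ∀ (m : ℕ) (x : ℚ_[p]), ‖x - a m‖ ≤ (p:ℝ)^(-(m:ℤ)-1) →
      ∀ y ∈ β, (p:ℝ)^(-(m:ℤ)) ≤ dist x y := by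
    intro m x hx y hy
    rw [hβ, Set.mem_iUnion] at hy
    obtain ⟨n, hyn⟩ := hy
    rw [Metric.mem_sphere, dist_eq_norm] at hyn
    rw [dist_eq_norm]
    rcases eq_or_ne n m with rfl | hnm
    · have h1 : ‖x - a n‖ < ‖-(y - a n)‖ := by
        rw [norm_neg, hyn]
        exact hx.trans_lt (zpow_lt_zpow_right₀ hp1 (by omega))
      have he : x - y = (x - a n) + (-(y - a n)) := by ring
      rw [he, padic_norm_add_of_lt h1, norm_neg, hyn]
    · have hv : ‖a m - a n‖ = (p:ℝ)^(1 - ((min m n : ℕ):ℤ)) := a_diff_norm' hrec hnm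
      have hmin : ((min m n : ℕ):ℤ) ≤ m := by push_cast; omega
      have hfirst : ‖(x - a m) - (y - a n)‖ < ‖a m - a n‖ := by
        refine (padic_norm_sub_le_max _ _).trans_lt ?_
        rw [hv]
        apply max_lt
        · exact hx.trans_lt (zpow_lt_zpow_right₀ hp1 (by omega))
        · rw [hyn]
          apply zpow_lt_zpow_right₀ hp1
          rcases lt_or_gt_of_ne hnm with h1 | h1
          · push_cast [min_eq_right h1.le]; omega
          · push_cast [min_eq_left h1.le]; omega
      have he : x - y = ((x - a m) - (y - a n)) + (a m - a n) := by ring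
      rw [he, padic_norm_add_of_lt hfirst, hv]
      apply zpow_le_zpow_right₀ hp1.le
      omega
  -- distance upper bound
  have hup : ∀ (m : ℕ) (x : ℚ_[p]), ‖x - a m‖ ≤ (p:ℝ)^(-(m:ℤ)-1) →
      Metric.infDist x β ≤ (p:ℝ)^(-(m:ℤ)) := by
    intro m x hx
    have hy : a m + (p:ℚ_[p])^(m:ℕ) ∈ β := by
      rw [hβ]
      refine Set.mem_iUnion.mpr ⟨m, ?_⟩
      rw [Metric.mem_sphere, dist_eq_norm]
      rw [show a m + (p:ℚ_[p])^(m:ℕ) - a m = (p:ℚ_[p])^(m:ℕ) by ring, Padic.norm_p_pow]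
    refine (Metric.infDist_le_dist_of_mem hy).trans_eq ?_
    rw [dist_eq_norm]
    have he : x - (a m + (p:ℚ_[p])^(m:ℕ)) = (x - a m) + (-((p:ℚ_[p])^(m:ℕ))) := by ring
    have h1 : ‖x - a m‖ < ‖-((p:ℚ_[p])^(m:ℕ))‖ := by
      rw [norm_neg, Padic.norm_p_pow]
      exact hx.trans_lt (zpow_lt_zpow_right₀ hp1 (by omega))
    rw [he, padic_norm_add_of_lt h1, norm_neg, Padic.norm_p_pow]
  -- not in boundary
  have hnot : ∀ (m : ℕ) (x : ℚ_[p]), ‖x - a m‖ ≤ (p:ℝ)^(-(m:ℤ)-1) → x ∉ β := by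
    intro m x hx hmem
    rw [hβ, Set.mem_iUnion] at hmem
    obtain ⟨n, hn⟩ := hmem
    rw [Metric.mem_sphere, dist_eq_norm] at hn
    rcases eq_or_ne n m with rfl | hnm
    · have := hx.trans_lt (zpow_lt_zpow_right₀ hp1 (show -(n:ℤ)-1 < -(n:ℤ) by omega))
      rw [hn] at this
      exact lt_irrefl _ this
    · have hv : ‖a m - a n‖ = (p:ℝ)^(1 - ((min m n : ℕ):ℤ)) := a_diff_norm' hrec hnm
      have hxa : ‖x - a n‖ = (p:ℝ)^(1 - ((min m n : ℕ):ℤ)) := by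
        have he : x - a n = (x - a m) + (a m - a n) := by ring
        have h1 : ‖x - a m‖ < ‖a m - a n‖ := by
          rw [hv]
          refine hx.trans_lt (zpow_lt_zpow_right₀ hp1 ?_)
          push_cast
          omega
        rw [he, padic_norm_add_of_lt h1, hv]
      rw [hxa] at hn
      have : -(n:ℤ) < 1 - ((min m n : ℕ):ℤ) := by
        rcases lt_or_gt_of_ne hnm with h1 | h1
        · push_cast [min_eq_right h1.le]; omega
        · push_cast [min_eq_left h1.le]; omega
      exact absurd hn (ne_of_gt (zpow_lt_zpow_right₀ hp1 this))
  -- the set identity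
  have hset : ({x ∈ ⋃ m : ℕ, Metric.closedBall (a m) ((p : ℝ) ^ (-(m : ℤ))) |
      Metric.infDist x β < ε} \ β) = ⋃ i : ℕ, f (k + 1 + i) := by
    ext x
    constructor
    · rintro ⟨⟨hxE, hxd⟩, hxβ⟩
      rw [Set.mem_iUnion] at hxE
      obtain ⟨m, hm⟩ := hxE
      rw [Metric.mem_closedBall, dist_eq_norm] at hm
      have hne' : ‖x - a m‖ ≠ (p:ℝ)^(-(m:ℤ)) := fun heq =>
        hxβ (Set.mem_iUnion.mpr ⟨m, by rw [Metric.mem_sphere, dist_eq_norm]; exact heq⟩)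
      have hm' : ‖x - a m‖ ≤ (p:ℝ)^(-(m:ℤ)-1) := by
        have hlt : ‖x - a m‖ < (p:ℝ)^(-(m:ℤ)) := lt_of_le_of_ne hm hne'
        refine (Padic.norm_le_pow_iff_norm_lt_pow_add_one (x - a m) (-(m:ℤ)-1)).mpr ?_
        rwa [show (-(m:ℤ)-1+1) = -(m:ℤ) by ring]
      have hklt : k + 1 ≤ m := by
        rw [← hcond m]
        obtain ⟨y, hyβ, hylt⟩ := (Metric.infDist_lt_iff hβne).mp hxd
        exact lt_of_le_of_lt (hlow m x hm' y hyβ) hylt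
      refine Set.mem_iUnion.mpr ⟨m - (k+1), ?_⟩
      rw [show k + 1 + (m - (k+1)) = m by omega]
      rw [hf, Metric.mem_closedBall, dist_eq_norm]
      exact hm'
    · intro hx
      rw [Set.mem_iUnion] at hx
      obtain ⟨i, hi⟩ := hx
      set m := k + 1 + i with hm
      rw [hf, Metric.mem_closedBall, dist_eq_norm] at hi
      refine ⟨⟨Set.mem_iUnion.mpr ⟨m, ?_⟩, ?_⟩, hnot m x hi⟩
      · rw [Metric.mem_closedBall, dist_eq_norm]
        exact hi.trans (zpow_le_zpow_right₀ hp1.le (by omega))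
      · exact (hup m x hi).trans_lt ((hcond m).mpr (by omega))
  rw [hβ] at hset
  rw [hset]
  -- disjointness
  have hdisj : Pairwise (Function.onFun Disjoint fun i : ℕ => f (k + 1 + i)) := by
    intro i j hij
    rw [Function.onFun, Set.disjoint_left]
    intro x hxi hxj
    rw [hf, Metric.mem_closedBall, dist_eq_norm] at hxi hxj
    set m := k + 1 + i
    set n := k + 1 + j
    have hmn : n ≠ m := by omega
    have hv : ‖a m - a n‖ = (p:ℝ)^(1 - ((min m n : ℕ):ℤ)) := a_diff_norm' hrec hmn
    have hle : ‖a m - a n‖ < (p:ℝ)^(1 - ((min m n : ℕ):ℤ)) := by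
      have he : a m - a n = -(x - a m) + (x - a n) := by ring
      rw [he]
      refine (Padic.nonarchimedean _ _).trans_lt ?_
      rw [norm_neg]
      apply max_lt
      · exact hxi.trans_lt (zpow_lt_zpow_right₀ hp1 (by push_cast; omega))
      · exact hxj.trans_lt (zpow_lt_zpow_right₀ hp1 (by push_cast; omega))
    rw [hv] at hle
    exact lt_irrefl _ hle
  rw [measure_iUnion hdisj (fun i => Metric.isClosed_closedBall.measurableSet)]
  -- value of each ball
  have hval : ∀ i : ℕ, padicHaar p (f (k + 1 + i))
      = ENNReal.ofReal ((p:ℝ)^(-(k:ℤ)-2) * ((p:ℝ)⁻¹)^i) := by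
    intro i
    have hrad : (p:ℝ)^(-((k+1+i:ℕ):ℤ)-1) = (p:ℝ)^(-((k+2+i:ℕ):ℤ)) := by
      congr 1; push_cast; ring
    have hrad2 : (p:ℝ)^(-((k+2+i:ℕ):ℤ)) = (p:ℝ)^(-(k:ℤ)-2) * ((p:ℝ)⁻¹)^i := by
      rw [inv_pow, ← zpow_natCast (p:ℝ) i, ← zpow_neg, ← zpow_add₀ hp0.ne']
      congr 1; push_cast; ring
    rw [hf]
    simp only []
    rw [hrad, padicHaar_closedBall p _ (k+2+i), hrad2]
  rw [tsum_congr hval]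
  have hinv : (p:ℝ)⁻¹ < 1 := inv_lt_one_of_one_lt₀ hp1
  have hsum : Summable (fun i : ℕ => (p:ℝ)^(-(k:ℤ)-2) * ((p:ℝ)⁻¹)^i) :=
    (summable_geometric_of_lt_one (by positivity) hinv).mul_left _
  rw [← ENNReal.ofReal_tsum_of_nonneg (fun i => by positivity) hsum]
  rw [tsum_mul_left, tsum_geometric_of_lt_one (by positivity) hinv]
  congr 1
  rw [hKk]
  have h1 : (1:ℝ) - (p:ℝ)⁻¹ ≠ 0 := by
    have : (0:ℝ) < 1 - (p:ℝ)⁻¹ := by linarith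
    linarith
  have h2 : (p:ℝ) - 1 ≠ 0 := by linarith
  have h3 : (p:ℝ)^(-(k:ℤ)-2) = (p:ℝ)^(-(k:ℤ)) * ((p:ℝ)*(p:ℝ))⁻¹ := by
    rw [show (-(k:ℤ)-2) = -(k:ℤ) + (-1) + (-1) by ring, zpow_add₀ hp0.ne', zpow_add₀ hp0.ne',
      zpow_neg_one, mul_inv]
    ring
  rw [h3]
  field_simp
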